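/- Let P be the law of three independent standard Gaussian random variables (N_1, N_2, N_3), i.e., the threefold product of the standard Gaussian measure N(0,1) on ℝ. Then the pushforward of P under the map x ↦ x₁/√(x₁² + x₂² + x₃²) (defined arbitrarily on the null set {x = 0}) is the uniform probability measure on [−1, 1], with density 1/2 with respect to Lebesgue measure restricted to [−1, 1]. -/

import Mathlib

open MeasureTheory ProbabilityTheory Real Set

theorem lintegral_comp_polarCoord_symm' (f : ℝ × ℝ → ENNReal) :
    (∫⁻ p in polarCoord.target, ENNReal.ofReal p.1 * f (polarCoord.symm p)) = ∫⁻ p, f p := by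
  set B : ℝ × ℝ → ℝ × ℝ →L[ℝ] ℝ × ℝ := fun p =>
    LinearMap.toContinuousLinearMap (Matrix.toLin (Module.Basis.finTwoProd ℝ) (Module.Basis.finTwoProd ℝ)
      !![Real.cos p.2, -p.1 * Real.sin p.2; Real.sin p.2, p.1 * Real.cos p.2])
  have A : ∀ p ∈ polarCoord.target, HasFDerivWithinAt polarCoord.symm (B p) polarCoord.target p :=
    fun p _ => (hasFDerivAt_polarCoord_symm p).hasFDerivWithinAt
  have B_det : ∀ p, (B p).det = p.1 := by
    intro p
    conv_rhs => rw [← one_mul p.1, ← cos_sq_add_sin_sq p.2]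
    simp only [B, neg_mul, LinearMap.det_toContinuousLinearMap, LinearMap.det_toLin,
      Matrix.det_fin_two_of, sub_neg_eq_add]
    ring
  symm
  calc
    ∫⁻ p, f p = ∫⁻ p in polarCoord.source, f p := by
      rw [← setLIntegral_univ]
      exact (setLIntegral_congr polarCoord_source_ae_eq_univ).symm
    _ = ∫⁻ p in polarCoord.symm '' polarCoord.target, f p := by
      rw [polarCoord.symm_image_target_eq_source]
    _ = ∫⁻ p in polarCoord.target, ENNReal.ofReal |(B p).det| * f (polarCoord.symm p) := by
      exact lintegral_image_eq_lintegral_abs_det_fderiv_mul volume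
        polarCoord.open_target.measurableSet A polarCoord.symm.injOn f
    _ = ∫⁻ p in polarCoord.target, ENNReal.ofReal p.1 * f (polarCoord.symm p) := by
      refine setLIntegral_congr_fun polarCoord.open_target.measurableSet
        (fun x hx => ?_)
      rw [B_det, abs_of_pos hx.1]

theorem cos_image_Ioo : Real.cos '' Ioo 0 π = Ioo (-1) 1 := by
  apply Subset.antisymm
  · rintro _ ⟨θ, hθ, rfl⟩
    constructor
    · have := Real.cos_lt_cos_of_nonneg_of_le_pi hθ.1.le le_rfl hθ.2
      simpa using this
    · have := Real.cos_lt_cos_of_nonneg_of_le_pi le_rfl hθ.2.le hθ.1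
      simpa using this
  · rintro t ⟨h1, h2⟩
    refine ⟨Real.arccos t, ⟨Real.arccos_pos.mpr h2, ?_⟩, Real.cos_arccos h1.le h2.le⟩
    rcases lt_or_eq_of_le (Real.arccos_le_pi t) with h | h
    · exact h
    · exact absurd (Real.arccos_eq_pi.mp h) (by linarith)

theorem lintegral_cos_indicator {s : Set ℝ} (hs : MeasurableSet s) :
    ∫⁻ θ in Ioo 0 π, ENNReal.ofReal (Real.sin θ) * s.indicator 1 (Real.cos θ)
      = volume (s ∩ Icc (-1) 1) := by
  have h := lintegral_image_eq_lintegral_abs_det_fderiv_mul (volume : Measure ℝ)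
    (measurableSet_Ioo : MeasurableSet (Ioo 0 π))
    (f' := fun θ => (1 : ℝ →L[ℝ] ℝ).smulRight (-Real.sin θ))
    (fun θ _ => (Real.hasDerivAt_cos θ).hasFDerivAt.hasFDerivWithinAt)
    (Real.injOn_cos.mono Ioo_subset_Icc_self) (s.indicator 1)
  rw [cos_image_Ioo] at h
  have h2 : ∫⁻ x in Ioo (-1 : ℝ) 1, s.indicator 1 x = volume (s ∩ Icc (-1) 1) := by
    rw [lintegral_indicator hs, Measure.restrict_restrict hs]
    simp only [Pi.one_apply]
    rw [setLIntegral_one]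
    apply le_antisymm
    · exact measure_mono (inter_subset_inter_right _ Ioo_subset_Icc_self)
    · calc volume (s ∩ Icc (-1) 1)
          ≤ volume ((s ∩ Ioo (-1) 1) ∪ {-1, 1}) := by
            apply measure_mono
            rintro x ⟨hxs, hx1, hx2⟩
            rcases eq_or_lt_of_le hx1 with h | h
            · exact Or.inr (by simp [← h])
            rcases eq_or_lt_of_le hx2 with h' | h'
            · exact Or.inr (by simp [h'])
            · exact Or.inl ⟨hxs, h, h'⟩
        _ ≤ volume (s ∩ Ioo (-1) 1) + volume ({-1, 1} : Set ℝ) := measure_union_le _ _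
        _ = volume (s ∩ Ioo (-1) 1) := by
            have : volume ({-1, 1} : Set ℝ) = 0 := by
              rw [Set.insert_eq]
              exact measure_union_null (measure_singleton _) (measure_singleton _)
            rw [this, add_zero]
  rw [← h2, h]
  refine setLIntegral_congr_fun measurableSet_Ioo (fun θ hθ => ?_)
  congr 2
  rw [ContinuousLinearMap.smulRight_one_eq_toSpanSingleton, ContinuousLinearMap.det_toSpanSingleton, abs_neg, abs_of_nonneg (Real.sin_nonneg_of_nonneg_of_le_pi hθ.1.le hθ.2.le)]

theorem integral_rho : ∫ ρ in Ioi (0:ℝ), ρ^2 * Real.exp (-ρ^2/2) = Real.sqrt (π/2) := by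
  have h := integral_rpow_mul_exp_neg_mul_rpow (p := 2) (q := 2) (b := 1/2)
    (by norm_num) (by norm_num) (by norm_num)
  rw [show ∫ ρ in Ioi (0:ℝ), ρ^2 * Real.exp (-ρ^2/2)
      = ∫ x in Ioi (0:ℝ), x ^ (2:ℝ) * Real.exp (-(1/2) * x ^ (2:ℝ)) from
    setIntegral_congr_fun measurableSet_Ioi fun x hx => by
      rw [show ((2:ℝ)) = ((2:ℕ):ℝ) by norm_num, Real.rpow_natCast]
      ring_nf, h]
  have hG : Real.Gamma ((2+1)/2) = Real.sqrt π / 2 := by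
    rw [show ((2+1)/2 : ℝ) = 1/2 + 1 by norm_num, Real.Gamma_add_one (by norm_num),
      Real.Gamma_one_half_eq]
    ring
  rw [hG]
  rw [show (-(2+1)/2 : ℝ) = -(3/2) by norm_num]
  rw [show ((1/2 : ℝ) ^ (-(3/2) : ℝ)) = (2:ℝ) ^ ((3/2):ℝ) by
    rw [Real.rpow_neg (by norm_num), ← Real.inv_rpow (by norm_num)]
    norm_num]
  have h2 : (2:ℝ) ^ ((3/2):ℝ) = 2 * Real.sqrt 2 := by
    rw [show ((3/2):ℝ) = 1 + 1/2 by norm_num, Real.rpow_add (by norm_num), Real.rpow_one,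
      ← Real.sqrt_eq_rpow]
  rw [h2]
  have hd : Real.sqrt (π/2) = Real.sqrt π / Real.sqrt 2 := Real.sqrt_div pi_pos.le 2
  have hs2 : Real.sqrt 2 * Real.sqrt 2 = 2 := Real.mul_self_sqrt (by norm_num)
  have h2pos : (0:ℝ) < Real.sqrt 2 := Real.sqrt_pos.mpr (by norm_num)
  rw [hd, eq_div_iff h2pos.ne']
  linear_combination (Real.sqrt π / 2) * hs2

theorem lintegral_rho : ∫⁻ ρ in Ioi (0:ℝ), ENNReal.ofReal (ρ^2 * Real.exp (-ρ^2/2))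
    = ENNReal.ofReal (Real.sqrt (π/2)) := by
  have hint : IntegrableOn (fun ρ : ℝ => ρ^2 * Real.exp (-ρ^2/2)) (Ioi 0) := by
    refine (integrableOn_rpow_mul_exp_neg_mul_sq (b := 1/2) (by norm_num)
      (s := 2) (by norm_num)).congr_fun (fun x hx => ?_) measurableSet_Ioi
    beta_reduce
    rw [show ((2:ℝ)) = ((2:ℕ):ℝ) by norm_num, Real.rpow_natCast]
    ring_nf
  rw [← ofReal_integral_eq_lintegral_ofReal hint
    (Filter.Eventually.of_forall fun x => by positivity), integral_rho]

noncomputable def w (x : ℝ) : ℝ := (Real.sqrt (2*π))⁻¹ * Real.exp (-x^2/2)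

lemma w_nonneg (x : ℝ) : 0 ≤ w x := by unfold w; positivity

lemma gaussianPDF_eq (x : ℝ) : gaussianPDF 0 1 x = ENNReal.ofReal (w x) := by
  simp only [gaussianPDF, gaussianPDFReal, w]
  norm_num

lemma gaussianReal_eq : gaussianReal 0 1 = volume.withDensity (fun x => ENNReal.ofReal (w x)) := by
  rw [gaussianReal, if_neg one_ne_zero]
  congr 1
  funext x
  exact gaussianPDF_eq x


lemma indicator_meas {s : Set ℝ} (hs : MeasurableSet s) {α : Type*} [MeasurableSpace α]
    {h : α → ℝ} (hh : Measurable h) :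
    Measurable (fun x => s.indicator (1 : ℝ → ENNReal) (h x)) :=
  (measurable_one.indicator hs).comp hh

lemma meas_arg (c : ℝ) : Measurable (fun r : ℝ => c / Real.sqrt (c^2 + r^2)) := by
  fun_prop

lemma inner_pair {s : Set ℝ} (hs : MeasurableSet s) (c : ℝ) :
    ∫⁻ p : ℝ × ℝ, (ENNReal.ofReal (w p.1) * ENNReal.ofReal (w p.2))
        * s.indicator 1 (c / Real.sqrt (c^2 + p.1^2 + p.2^2))
      = ∫⁻ r in Ioi (0:ℝ), ENNReal.ofReal (r * Real.exp (-r^2/2))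
        * s.indicator 1 (c / Real.sqrt (c^2 + r^2)) := by
  rw [← lintegral_comp_polarCoord_symm']
  have step1 : ∀ p ∈ polarCoord.target,
      ENNReal.ofReal p.1 * ((ENNReal.ofReal (w (polarCoord.symm p).1)
          * ENNReal.ofReal (w (polarCoord.symm p).2))
        * s.indicator 1 (c / Real.sqrt (c^2 + (polarCoord.symm p).1^2 + (polarCoord.symm p).2^2)))
      = ENNReal.ofReal (p.1 * Real.exp (-p.1^2/2)) * s.indicator 1 (c / Real.sqrt (c^2 + p.1^2))
        * ENNReal.ofReal ((2*π)⁻¹) := by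
    rintro ⟨r, θ⟩ ⟨hr, hθ⟩
    have hsq : (r * Real.cos θ)^2 + (r * Real.sin θ)^2 = r^2 := by
      have := Real.sin_sq_add_cos_sq θ
      ring_nf
      nlinarith [this]
    simp only [polarCoord_symm_apply]
    rw [show c^2 + (r * Real.cos θ)^2 + (r * Real.sin θ)^2 = c^2 + r^2 by
      rw [add_assoc, hsq]]
    have key : ENNReal.ofReal r * (ENNReal.ofReal (w (r*Real.cos θ)) * ENNReal.ofReal (w (r*Real.sin θ)))
        = ENNReal.ofReal (r * Real.exp (-r^2/2)) * ENNReal.ofReal ((2*π)⁻¹) := by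
      have hr' : (0:ℝ) ≤ r := le_of_lt hr
      rw [← ENNReal.ofReal_mul (w_nonneg _), ← ENNReal.ofReal_mul hr',
        ← ENNReal.ofReal_mul (mul_nonneg hr' (Real.exp_pos _).le)]
      congr 1
      unfold w
      have he : Real.exp (-(r*Real.cos θ)^2/2) * Real.exp (-(r*Real.sin θ)^2/2)
          = Real.exp (-r^2/2) := by
        rw [← Real.exp_add]; congr 1; linarith [hsq]
      have hss : (Real.sqrt (2*π))⁻¹ * (Real.sqrt (2*π))⁻¹ = (2*π)⁻¹ := by
        rw [← mul_inv, Real.mul_self_sqrt (by positivity)]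
      calc r * ((Real.sqrt (2*π))⁻¹ * Real.exp (-(r*Real.cos θ)^2/2)
            * ((Real.sqrt (2*π))⁻¹ * Real.exp (-(r*Real.sin θ)^2/2)))
          = r * (Real.exp (-(r*Real.cos θ)^2/2) * Real.exp (-(r*Real.sin θ)^2/2))
            * ((Real.sqrt (2*π))⁻¹ * (Real.sqrt (2*π))⁻¹) := by ring
        _ = r * Real.exp (-r^2/2) * (2*π)⁻¹ := by rw [he, hss]
    calc ENNReal.ofReal r * (ENNReal.ofReal (w (r*Real.cos θ)) * ENNReal.ofReal (w (r*Real.sin θ))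
            * s.indicator 1 (c / Real.sqrt (c^2 + r^2)))
        = ENNReal.ofReal r * (ENNReal.ofReal (w (r*Real.cos θ))
            * ENNReal.ofReal (w (r*Real.sin θ))) * s.indicator 1 (c / Real.sqrt (c^2 + r^2)) := by
          ring
      _ = ENNReal.ofReal (r * Real.exp (-r^2/2)) * s.indicator 1 (c / Real.sqrt (c^2 + r^2))
            * ENNReal.ofReal ((2*π)⁻¹) := by rw [key]; ring
  rw [setLIntegral_congr_fun polarCoord.open_target.measurableSet
    step1]
  have htarget : polarCoord.target = Ioi (0:ℝ) ×ˢ Ioo (-π) π := rfl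
  rw [htarget, Measure.volume_eq_prod, ← Measure.prod_restrict]
  set F : ℝ → ENNReal := fun r => ENNReal.ofReal (r * Real.exp (-r^2/2))
    * s.indicator 1 (c / Real.sqrt (c^2 + r^2)) with hF
  have hFmeas : Measurable F := by
    apply Measurable.mul
    · exact ENNReal.measurable_ofReal.comp (by fun_prop)
    · exact indicator_meas hs (meas_arg c)
  rw [lintegral_prod _ (by exact ((hFmeas.comp measurable_fst).mul measurable_const).aemeasurable)]
  have hθ : ∀ r : ℝ, (∫⁻ θ in Ioo (-π) π, F r * ENNReal.ofReal ((2*π)⁻¹))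
      = F r * ENNReal.ofReal ((2*π)⁻¹) * ENNReal.ofReal (2*π) := by
    intro r
    rw [setLIntegral_const, Real.volume_Ioo, show π - -π = 2*π by ring]
  simp only [hθ]
  refine setLIntegral_congr_fun measurableSet_Ioi (fun r hr => ?_)
  have hcancel : ENNReal.ofReal ((2*π)⁻¹) * ENNReal.ofReal (2*π) = 1 := by
    rw [← ENNReal.ofReal_mul (by positivity), inv_mul_cancel₀ (by positivity), ENNReal.ofReal_one]
  rw [setLIntegral_const, Real.volume_Ioo, show π - -π = 2*π by ring, mul_assoc, mul_assoc, hcancel,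
    mul_one]

lemma meas_arg2 : Measurable (fun p : ℝ × ℝ => p.1 / Real.sqrt (p.1^2 + p.2^2)) := by fun_prop

lemma outer {s : Set ℝ} (hs : MeasurableSet s) :
    ∫⁻ a : ℝ, ENNReal.ofReal (w a) *
        ∫⁻ r in Ioi (0:ℝ), ENNReal.ofReal (r * Real.exp (-r^2/2))
          * s.indicator 1 (a / Real.sqrt (a^2 + r^2))
      = ENNReal.ofReal (1/2) * volume (s ∩ Icc (-1) 1) := by
  set H : ℝ × ℝ → ENNReal := fun p => ENNReal.ofReal (w p.1)
      * (ENNReal.ofReal (p.2 * Real.exp (-p.2^2/2))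
        * s.indicator 1 (p.1 / Real.sqrt (p.1^2 + p.2^2)))
      * (Ioi (0:ℝ)).indicator 1 p.2 with hH
  have hHmeas : Measurable H := by
    refine ((Measurable.mul ?_ (Measurable.mul ?_ ?_)).mul ?_)
    · exact (ENNReal.measurable_ofReal.comp (by unfold w; fun_prop)).comp measurable_fst
    · exact ENNReal.measurable_ofReal.comp (by fun_prop)
    · exact indicator_meas hs meas_arg2
    · exact (measurable_one.indicator measurableSet_Ioi).comp measurable_snd
  have step_a : ∀ a : ℝ, ENNReal.ofReal (w a) *
      (∫⁻ r in Ioi (0:ℝ), ENNReal.ofReal (r * Real.exp (-r^2/2))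
        * s.indicator 1 (a / Real.sqrt (a^2 + r^2)))
      = ∫⁻ r, H (a, r) := by
    intro a
    rw [← lintegral_indicator measurableSet_Ioi]
    have : (Ioi (0:ℝ)).indicator (fun r => ENNReal.ofReal (r * Real.exp (-r^2/2))
        * s.indicator 1 (a / Real.sqrt (a^2 + r^2)))
        = fun r => (ENNReal.ofReal (r * Real.exp (-r^2/2))
          * s.indicator 1 (a / Real.sqrt (a^2 + r^2))) * (Ioi (0:ℝ)).indicator 1 r := by
      funext r
      by_cases h : r ∈ Ioi (0:ℝ) <;> simp [h]
    rw [this, ← lintegral_const_mul _ (by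
      exact ((ENNReal.measurable_ofReal.comp (by fun_prop)).mul
        (indicator_meas hs (meas_arg a))).mul
        (measurable_one.indicator measurableSet_Ioi))]
    simp only [hH, mul_assoc]
  simp only [step_a]
  rw [← lintegral_prod _ hHmeas.aemeasurable, ← Measure.volume_eq_prod,
    ← lintegral_comp_polarCoord_symm']
  set K : ℝ → ENNReal := fun ρ =>
    ENNReal.ofReal ((Real.sqrt (2*π))⁻¹ * (ρ^2 * Real.exp (-ρ^2/2))) with hK
  set L : ℝ → ENNReal := fun θ =>
    ENNReal.ofReal (Real.sin θ) * s.indicator 1 (Real.cos θ) * (Ioo 0 π).indicator 1 θ with hL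
  have step_c : ∀ q ∈ polarCoord.target,
      ENNReal.ofReal q.1 * H (polarCoord.symm q) = K q.1 * L q.2 := by
    rintro ⟨ρ, θ⟩ ⟨hρ, hθ⟩
    simp only [polarCoord_symm_apply, hH, hK, hL]
    have hρ' : (0:ℝ) < ρ := hρ
    by_cases hpos : 0 < θ ∧ θ < π
    · have hsin : 0 < Real.sin θ := Real.sin_pos_of_pos_of_lt_pi hpos.1 hpos.2
      have hind1 : (Ioi (0:ℝ)).indicator (1 : ℝ → ENNReal) (ρ * Real.sin θ) = 1 := by
        simp [Set.indicator_of_mem, mul_pos hρ' hsin]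
      have hind2 : (Ioo 0 π).indicator (1 : ℝ → ENNReal) θ = 1 := by
        simp [Set.indicator_of_mem, hpos.1, hpos.2]
      rw [hind1, hind2, mul_one, mul_one]
      have hsq : (ρ * Real.cos θ)^2 + (ρ * Real.sin θ)^2 = ρ^2 := by
        have := Real.sin_sq_add_cos_sq θ
        nlinarith [this]
      rw [hsq, Real.sqrt_sq hρ'.le,
        show ρ * Real.cos θ / ρ = Real.cos θ by field_simp]
      have key : ENNReal.ofReal ρ * (ENNReal.ofReal (w (ρ * Real.cos θ))
          * ENNReal.ofReal (ρ * Real.sin θ * Real.exp (-(ρ * Real.sin θ)^2/2)))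
          = ENNReal.ofReal ((Real.sqrt (2*π))⁻¹ * (ρ^2 * Real.exp (-ρ^2/2)))
            * ENNReal.ofReal (Real.sin θ) := by
        rw [← ENNReal.ofReal_mul (w_nonneg _), ← ENNReal.ofReal_mul hρ'.le,
          ← ENNReal.ofReal_mul (by positivity)]
        congr 1
        unfold w
        have he : Real.exp (-(ρ*Real.cos θ)^2/2) * Real.exp (-(ρ*Real.sin θ)^2/2)
            = Real.exp (-ρ^2/2) := by
          rw [← Real.exp_add]; congr 1; linarith [hsq]
        calc ρ * ((Real.sqrt (2*π))⁻¹ * Real.exp (-(ρ*Real.cos θ)^2/2)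
              * (ρ * Real.sin θ * Real.exp (-(ρ*Real.sin θ)^2/2)))
            = (ρ^2 * Real.sin θ * (Real.sqrt (2*π))⁻¹)
              * (Real.exp (-(ρ*Real.cos θ)^2/2) * Real.exp (-(ρ*Real.sin θ)^2/2)) := by ring
          _ = (ρ^2 * Real.sin θ * (Real.sqrt (2*π))⁻¹) * Real.exp (-ρ^2/2) := by rw [he]
          _ = (Real.sqrt (2*π))⁻¹ * (ρ^2 * Real.exp (-ρ^2/2)) * Real.sin θ := by ring
      calc ENNReal.ofReal ρ * (ENNReal.ofReal (w (ρ * Real.cos θ))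
              * (ENNReal.ofReal (ρ * Real.sin θ * Real.exp (-(ρ * Real.sin θ)^2/2))
                * s.indicator 1 (Real.cos θ)))
          = ENNReal.ofReal ρ * (ENNReal.ofReal (w (ρ * Real.cos θ))
              * ENNReal.ofReal (ρ * Real.sin θ * Real.exp (-(ρ * Real.sin θ)^2/2)))
            * s.indicator 1 (Real.cos θ) := by ring
        _ = ENNReal.ofReal ((Real.sqrt (2*π))⁻¹ * (ρ^2 * Real.exp (-ρ^2/2)))
              * ENNReal.ofReal (Real.sin θ) * s.indicator 1 (Real.cos θ) := by rw [key]
        _ = ENNReal.ofReal ((Real.sqrt (2*π))⁻¹ * (ρ^2 * Real.exp (-ρ^2/2)))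
              * (ENNReal.ofReal (Real.sin θ) * s.indicator 1 (Real.cos θ)) := by ring
    · push_neg at hpos
      have hθle : θ ≤ 0 := by
        by_contra h
        push_neg at h
        exact absurd (hpos h) (not_le.mpr hθ.2)
      have hsin : Real.sin θ ≤ 0 := by
        have := Real.sin_nonneg_of_nonneg_of_le_pi (x := -θ) (by linarith) (by linarith [hθ.1])
        rw [Real.sin_neg] at this
        linarith
      have hind1 : (Ioi (0:ℝ)).indicator (1 : ℝ → ENNReal) (ρ * Real.sin θ) = 0 := by
        apply Set.indicator_of_notMem
        simp only [mem_Ioi, not_lt]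
        exact mul_nonpos_of_nonneg_of_nonpos hρ'.le hsin
      have hind2 : (Ioo 0 π).indicator (1 : ℝ → ENNReal) θ = 0 := by
        apply Set.indicator_of_notMem
        rintro ⟨h1, -⟩
        exact absurd h1 (not_lt.mpr hθle)
      rw [hind1, hind2]
      simp
  rw [setLIntegral_congr_fun polarCoord.open_target.measurableSet
    step_c]
  have hKmeas : Measurable K := ENNReal.measurable_ofReal.comp (by fun_prop)
  have hLmeas : Measurable L := by
    refine Measurable.mul (Measurable.mul ?_ ?_) ?_
    · exact ENNReal.measurable_ofReal.comp Real.measurable_sin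
    · exact indicator_meas hs Real.measurable_cos
    · exact measurable_one.indicator measurableSet_Ioo
  have htarget : polarCoord.target = Ioi (0:ℝ) ×ˢ Ioo (-π) π := rfl
  rw [htarget, Measure.volume_eq_prod, ← Measure.prod_restrict,
    lintegral_prod_mul hKmeas.aemeasurable hLmeas.aemeasurable]
  have hKint : ∫⁻ ρ in Ioi (0:ℝ), K ρ
      = ENNReal.ofReal ((Real.sqrt (2*π))⁻¹) * ENNReal.ofReal (Real.sqrt (π/2)) := by
    simp only [hK]
    have : ∀ ρ : ℝ, ENNReal.ofReal ((Real.sqrt (2*π))⁻¹ * (ρ^2 * Real.exp (-ρ^2/2)))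
        = ENNReal.ofReal ((Real.sqrt (2*π))⁻¹) * ENNReal.ofReal (ρ^2 * Real.exp (-ρ^2/2)) := by
      intro ρ
      rw [← ENNReal.ofReal_mul (by positivity)]
    simp only [this]
    have hm : Measurable fun ρ : ℝ => ENNReal.ofReal (ρ^2 * Real.exp (-ρ^2/2)) :=
      ENNReal.measurable_ofReal.comp (by fun_prop)
    rw [lintegral_const_mul _ hm, lintegral_rho]
  have hLint : ∫⁻ θ in Ioo (-π) π, L θ = volume (s ∩ Icc (-1) 1) := by
    simp only [hL]
    have : (fun θ => ENNReal.ofReal (Real.sin θ) * s.indicator 1 (Real.cos θ)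
        * (Ioo 0 π).indicator 1 θ)
        = (Ioo 0 π).indicator (fun θ => ENNReal.ofReal (Real.sin θ)
            * s.indicator 1 (Real.cos θ)) := by
      funext θ
      by_cases h : θ ∈ Ioo 0 π <;> simp [h]
    rw [this, lintegral_indicator measurableSet_Ioo, Measure.restrict_restrict measurableSet_Ioo,
      inter_eq_left.mpr (Ioo_subset_Ioo (by linarith [pi_pos]) le_rfl),
      lintegral_cos_indicator hs]
  rw [hKint, hLint]
  congr 1
  rw [← ENNReal.ofReal_mul (by positivity)]
  congr 1
  have h4 : Real.sqrt 4 = 2 := by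
    rw [show (4:ℝ) = 2^2 by norm_num, Real.sqrt_sq (by norm_num)]
  have : Real.sqrt (π/2) = Real.sqrt (2*π) / 2 := by
    rw [show (π/2 : ℝ) = (2*π)/4 by ring, Real.sqrt_div (by positivity), h4]
  rw [this]
  have hpos : (0:ℝ) < Real.sqrt (2*π) := Real.sqrt_pos.mpr (by positivity)
  field_simp

lemma inner_double {s : Set ℝ} (hs : MeasurableSet s) (a : ℝ) :
    ∫⁻ q : ℝ × ℝ, s.indicator 1 (a / Real.sqrt (a^2 + q.1^2 + q.2^2))
        ∂((volume.withDensity fun x => ENNReal.ofReal (w x)).prod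
          (volume.withDensity fun x => ENNReal.ofReal (w x)))
      = ∫⁻ r in Ioi (0:ℝ), ENNReal.ofReal (r * Real.exp (-r^2/2))
          * s.indicator 1 (a / Real.sqrt (a^2 + r^2)) := by
  have hwm : Measurable fun x : ℝ => ENNReal.ofReal (w x) :=
    ENNReal.measurable_ofReal.comp (by unfold w; fun_prop)
  have hindm : ∀ b : ℝ, Measurable fun c : ℝ => s.indicator (1 : ℝ → ENNReal)
      (a / Real.sqrt (a^2 + b^2 + c^2)) :=
    fun b => indicator_meas hs (by fun_prop)
  have hindm2 : Measurable fun q : ℝ × ℝ => s.indicator (1 : ℝ → ENNReal)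
      (a / Real.sqrt (a^2 + q.1^2 + q.2^2)) :=
    indicator_meas hs (by fun_prop)
  rw [lintegral_prod _ hindm2.aemeasurable]
  have step1 : ∀ b : ℝ, (∫⁻ c, s.indicator (1 : ℝ → ENNReal) (a / Real.sqrt (a^2 + b^2 + c^2))
      ∂(volume.withDensity fun x => ENNReal.ofReal (w x)))
      = ∫⁻ c, ENNReal.ofReal (w c) * s.indicator 1 (a / Real.sqrt (a^2 + b^2 + c^2)) := by
    intro b
    rw [lintegral_withDensity_eq_lintegral_mul _ hwm (hindm b)]
    rfl
  simp only [step1]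
  have hm2 : Measurable (Function.uncurry fun b c : ℝ => ENNReal.ofReal (w c)
      * s.indicator (1 : ℝ → ENNReal) (a / Real.sqrt (a^2 + b^2 + c^2))) := by
    apply Measurable.mul
    · exact hwm.comp measurable_snd
    · exact indicator_meas hs (by fun_prop)
  rw [lintegral_withDensity_eq_lintegral_mul _ hwm hm2.lintegral_prod_right]
  rw [← inner_pair hs a, Measure.volume_eq_prod, lintegral_prod _ (by
    exact (((hwm.comp measurable_fst).mul (hwm.comp measurable_snd)).mul hindm2).aemeasurable)]
  congr 1
  funext b
  simp only [Pi.mul_apply]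
  rw [← lintegral_const_mul _ (f := fun c => ENNReal.ofReal (w c)
    * s.indicator 1 (a / Real.sqrt (a^2 + b^2 + c^2))) (hwm.mul (hindm b))]
  congr 1
  funext c
  ring

lemma gauss3_map {s : Set ℝ} (hs : MeasurableSet s) :
    ((gaussianReal 0 1).prod ((gaussianReal 0 1).prod (gaussianReal 0 1)))
      ((fun p : ℝ × ℝ × ℝ => p.1 / Real.sqrt (p.1^2 + p.2.1^2 + p.2.2^2)) ⁻¹' s)
    = ENNReal.ofReal (1/2) * volume (s ∩ Icc (-1) 1) := by
  have hwm : Measurable fun x : ℝ => ENNReal.ofReal (w x) :=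
    ENNReal.measurable_ofReal.comp (by unfold w; fun_prop)
  have hg : Measurable fun p : ℝ × ℝ × ℝ => p.1 / Real.sqrt (p.1^2 + p.2.1^2 + p.2.2^2) := by
    fun_prop
  have hind : Measurable fun z : ℝ × ℝ × ℝ =>
      s.indicator (1 : ℝ → ENNReal) (z.1 / Real.sqrt (z.1^2 + z.2.1^2 + z.2.2^2)) :=
    indicator_meas hs hg
  rw [← lintegral_indicator_one (hg hs)]
  have hindeq : ((fun p : ℝ × ℝ × ℝ => p.1 / Real.sqrt (p.1^2 + p.2.1^2 + p.2.2^2)) ⁻¹' s).indicator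
      (1 : ℝ × ℝ × ℝ → ENNReal)
      = fun z => s.indicator 1 (z.1 / Real.sqrt (z.1^2 + z.2.1^2 + z.2.2^2)) := by
    funext z
    by_cases h : z.1 / Real.sqrt (z.1^2 + z.2.1^2 + z.2.2^2) ∈ s
    · rw [Set.indicator_of_mem (by exact h), Set.indicator_of_mem h]
      rfl
    · rw [Set.indicator_of_notMem (by exact h), Set.indicator_of_notMem h]
  rw [hindeq]
  rw [lintegral_prod _ hind.aemeasurable]
  simp only [gaussianReal_eq]
  have hinner : ∀ a : ℝ, (∫⁻ q : ℝ × ℝ,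
      s.indicator (1 : ℝ → ENNReal) (a / Real.sqrt (a^2 + q.1^2 + q.2^2))
      ∂((volume.withDensity fun x => ENNReal.ofReal (w x)).prod
        (volume.withDensity fun x => ENNReal.ofReal (w x))))
      = ∫⁻ r in Ioi (0:ℝ), ENNReal.ofReal (r * Real.exp (-r^2/2))
          * s.indicator 1 (a / Real.sqrt (a^2 + r^2)) :=
    fun a => inner_double hs a
  simp only [hinner]
  have hFm : Measurable fun a : ℝ => ∫⁻ r in Ioi (0:ℝ),
      ENNReal.ofReal (r * Real.exp (-r^2/2)) * s.indicator 1 (a / Real.sqrt (a^2 + r^2)) := by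
    have : Measurable (Function.uncurry fun a r : ℝ =>
        ENNReal.ofReal (r * Real.exp (-r^2/2)) * s.indicator (1 : ℝ → ENNReal)
          (a / Real.sqrt (a^2 + r^2))) := by
      apply Measurable.mul
      · exact ENNReal.measurable_ofReal.comp (by fun_prop)
      · exact indicator_meas hs (by fun_prop)
    exact Measurable.lintegral_prod_right' (ν := volume.restrict (Ioi 0)) this
  rw [lintegral_withDensity_eq_lintegral_mul _ hwm hFm]
  exact outer hs

/-- Probabilistic Archimedes: if `(N₁, N₂, N₃)` are i.i.d. standard Gaussians,
then `N₁ / √(N₁² + N₂² + N₃²)` is uniformly distributed on `[-1, 1]`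
(density `1/2` w.r.t. Lebesgue measure restricted to `[-1, 1]`). -/
theorem gaussian_normalized_coordinate_uniform :
    (Measure.pi (fun _ : Fin 3 => gaussianReal 0 1)).map
        (fun x => x 0 / Real.sqrt ((x 0) ^ 2 + (x 1) ^ 2 + (x 2) ^ 2)) =
      ((volume : Measure ℝ).restrict (Set.Icc (-1) 1)).withDensity
        (fun _ => ENNReal.ofReal (1 / 2)) := by
  have hg : Measurable fun p : ℝ × ℝ × ℝ => p.1 / Real.sqrt (p.1^2 + p.2.1^2 + p.2.2^2) := by
    fun_prop
  have hf : Measurable fun x : Fin 3 → ℝ =>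
      x 0 / Real.sqrt ((x 0) ^ 2 + (x 1) ^ 2 + (x 2) ^ 2) := by
    have h0 : Measurable fun x : Fin 3 → ℝ => x 0 := measurable_pi_apply 0
    have h1 : Measurable fun x : Fin 3 → ℝ => x 1 := measurable_pi_apply 1
    have h2 : Measurable fun x : Fin 3 → ℝ => x 2 := measurable_pi_apply 2
    fun_prop
  set e1 := MeasurableEquiv.piFinSuccAbove (fun _ : Fin 3 => ℝ) 0 with he1
  set e2 := MeasurableEquiv.piFinSuccAbove (fun _ : Fin 2 => ℝ) 0 with he2
  set e3 := MeasurableEquiv.funUnique (Fin 1) ℝ with he3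
  have h1 := measurePreserving_piFinSuccAbove (fun _ : Fin 3 => gaussianReal 0 1) 0
  have h2 := measurePreserving_piFinSuccAbove (fun _ : Fin 2 => gaussianReal 0 1) 0
  have h3 := measurePreserving_funUnique (gaussianReal 0 1) (Fin 1)
  have hE : MeasurePreserving (Prod.map (id : ℝ → ℝ) (Prod.map (id : ℝ → ℝ) e3 ∘ e2) ∘ e1)
      (Measure.pi fun _ : Fin 3 => gaussianReal 0 1)
      ((gaussianReal 0 1).prod ((gaussianReal 0 1).prod (gaussianReal 0 1))) :=
    ((MeasurePreserving.id _).prod (((MeasurePreserving.id _).prod h3).comp h2)).comp h1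
  have hfeq : (fun x : Fin 3 → ℝ => x 0 / Real.sqrt ((x 0) ^ 2 + (x 1) ^ 2 + (x 2) ^ 2))
      = (fun p : ℝ × ℝ × ℝ => p.1 / Real.sqrt (p.1^2 + p.2.1^2 + p.2.2^2))
        ∘ (Prod.map (id : ℝ → ℝ) (Prod.map (id : ℝ → ℝ) e3 ∘ e2) ∘ e1) := by
    funext x
    have hF : (Prod.map (id : ℝ → ℝ) (Prod.map (id : ℝ → ℝ) e3 ∘ e2)) (e1 x)
        = (x 0, x 1, x 2) := by
      simp only [he1, he2, he3, MeasurableEquiv.piFinSuccAbove, MeasurableEquiv.funUnique,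
        Fin.succAbove, Prod.map, Function.comp_apply, MeasurableEquiv.coe_mk, Equiv.coe_fn_mk]
      simp [Fin.tail]
    simp only [Function.comp_apply, hF]
  ext s hs
  rw [Measure.map_apply hf hs, hfeq, Set.preimage_comp, hE.measure_preimage (hg hs).nullMeasurableSet,
    gauss3_map hs, withDensity_apply _ hs, setLIntegral_const, Measure.restrict_apply hs]
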